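/- Let s > 0, and let (t_k) and (m_k) be sequences of nonnegative reals with t_k := #T_k − #T₀ ≤ C_S ∑_{i=0}^{k−1} m_i (complexity of refinement), m_i ≤ C₁ e_i^{−1/(2s)} (cardinality of marked sets), and e_i ≤ C₂ z_i² where z_{i+1} ≤ ρ z_i with 0 < ρ < 1, and e_k ≥ c₃ z_k² (two-sided comparability at the final step). Then there is a constant C, depending on C_S, C₁, C₂, c₃, ρ, s, such that e_k^{1/2} ≤ C (t_k)^{−s} for all k ≥ 1 with t_k > 0. -/

import Mathlib

/-- Abstract quasi-optimality: combining the refinement complexity bound, the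
cardinality bound for marked sets, the contraction, and comparability of the total
error with the contracted quantity yields the optimal rate `e_k^{1/2} ≤ C t_k^{-s}`. -/
theorem stmt16 (s C_S C₁ C₂ c₃ ρ : ℝ) (t m e z : ℕ → ℝ)
    (hs : 0 < s) (hCS : 0 < C_S) (hC₁ : 0 < C₁) (hC₂ : 0 < C₂) (hc₃ : 0 < c₃)
    (hρ0 : 0 < ρ) (hρ1 : ρ < 1)
    (ht0 : ∀ k, 0 ≤ t k) (hm0 : ∀ k, 0 ≤ m k) (hz : ∀ k, 0 < z k)
    (ht : ∀ k, t k ≤ C_S * ∑ i ∈ Finset.range k, m i)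
    (hm : ∀ i, m i ≤ C₁ * (e i) ^ (-(1:ℝ)/(2*s)))
    (he : ∀ i, e i ≤ C₂ * (z i)^2)
    (hzcontr : ∀ i, z (i+1) ≤ ρ * z i)
    (hek : ∀ k, c₃ * (z k)^2 ≤ e k) :
    ∃ C > (0:ℝ), ∀ k ≥ 1, 0 < t k → (e k) ^ ((1:ℝ)/2) ≤ C * (t k) ^ (-s) := by
  have he0 : ∀ i, 0 < e i := fun i =>
    lt_of_lt_of_le (by have := hz i; positivity) (hek i)
  set r : ℝ := ρ ^ ((1:ℝ)/s) with hrdef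
  have hr0 : 0 < r := Real.rpow_pos_of_pos hρ0 _
  have hr1 : r < 1 := Real.rpow_lt_one hρ0.le hρ1 (by positivity)
  set p : ℝ := -(1:ℝ)/(2*s) with hpdef
  have hp_neg : p ≤ 0 := by
    rw [hpdef]
    apply div_nonpos_of_nonpos_of_nonneg <;> nlinarith
  -- step 1: z i ^ (-1/s) ≤ z k ^ (-1/s) * r ^ (k - i) for i ≤ k
  have hstep : ∀ i, (z i) ^ (-(1:ℝ)/s) ≤ r * (z (i+1)) ^ (-(1:ℝ)/s) := by
    intro i
    have h1 : (ρ * z i) ^ (-(1:ℝ)/s) ≤ (z (i+1)) ^ (-(1:ℝ)/s) :=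
      Real.rpow_le_rpow_of_nonpos (hz (i+1)) (hzcontr i)
        (by apply div_nonpos_of_nonpos_of_nonneg <;> linarith)
    have h2 : (ρ * z i) ^ (-(1:ℝ)/s) = ρ ^ (-(1:ℝ)/s) * (z i) ^ (-(1:ℝ)/s) :=
      Real.mul_rpow hρ0.le (hz i).le
    have h3 : ρ ^ (-(1:ℝ)/s) = r⁻¹ := by
      rw [hrdef, ← Real.rpow_neg hρ0.le]
      congr 1; ring
    rw [h2, h3] at h1
    calc (z i) ^ (-(1:ℝ)/s) = r * (r⁻¹ * (z i) ^ (-(1:ℝ)/s)) := by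
          field_simp
      _ ≤ r * (z (i+1)) ^ (-(1:ℝ)/s) := by
          exact mul_le_mul_of_nonneg_left h1 hr0.le
  have hziter : ∀ i k, i ≤ k → (z i) ^ (-(1:ℝ)/s) ≤ r ^ (k - i) * (z k) ^ (-(1:ℝ)/s) := by
    intro i k hik
    induction k with
    | zero => interval_cases i; simp
    | succ k ih =>
      rcases Nat.lt_or_ge i (k+1) with h | h
      · have hik' : i ≤ k := Nat.lt_succ_iff.mp h
        calc (z i) ^ (-(1:ℝ)/s) ≤ r ^ (k - i) * (z k) ^ (-(1:ℝ)/s) := ih hik'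
          _ ≤ r ^ (k - i) * (r * (z (k+1)) ^ (-(1:ℝ)/s)) := by
              exact mul_le_mul_of_nonneg_left (hstep k) (by positivity)
          _ = r ^ (k + 1 - i) * (z (k+1)) ^ (-(1:ℝ)/s) := by
              rw [← mul_assoc, ← pow_succ]
              congr 2
              omega
      · have : i = k+1 := le_antisymm hik h
        simp [this]
  -- step 2: m i ≤ C₁ * c₃^p * z i ^ (-1/s)
  have hmz : ∀ i, m i ≤ C₁ * c₃ ^ p * (z i) ^ (-(1:ℝ)/s) := by
    intro i
    have h1 : (e i) ^ p ≤ (c₃ * (z i)^2) ^ p :=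
      Real.rpow_le_rpow_of_nonpos (by have := hz i; positivity) (hek i) hp_neg
    have h2 : (c₃ * (z i)^2) ^ p = c₃ ^ p * (z i) ^ (-(1:ℝ)/s) := by
      rw [Real.mul_rpow hc₃.le (by positivity)]
      congr 1
      rw [← Real.rpow_natCast (z i) 2, ← Real.rpow_mul (hz i).le]
      congr 1
      rw [hpdef]
      field_simp
      norm_num
    calc m i ≤ C₁ * (e i) ^ p := hm i
      _ ≤ C₁ * (c₃ ^ p * (z i) ^ (-(1:ℝ)/s)) := by
          rw [← h2]; exact mul_le_mul_of_nonneg_left h1 hC₁.le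
      _ = C₁ * c₃ ^ p * (z i) ^ (-(1:ℝ)/s) := by ring
  -- geometric sum bound
  have hgeom : ∀ n : ℕ, ∑ i ∈ Finset.range n, r ^ i ≤ 1 / (1 - r) := by
    intro n
    have h := geom_sum_mul r n
    have hrn : (0:ℝ) ≤ r ^ n := by positivity
    rw [le_div_iff₀ (by linarith)]
    nlinarith [h]
  -- step 3: t k ≤ A * z k ^ (-1/s)
  set A : ℝ := C_S * (C₁ * c₃ ^ p * (1 / (1 - r))) with hAdef
  have hc₃p : 0 < c₃ ^ p := Real.rpow_pos_of_pos hc₃ _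
  have hA0 : 0 < A := by
    rw [hAdef]
    have : 0 < 1 - r := by linarith
    positivity
  have htA : ∀ k, t k ≤ A * (z k) ^ (-(1:ℝ)/s) := by
    intro k
    have hsum : ∑ i ∈ Finset.range k, m i ≤
        (C₁ * c₃ ^ p * (z k) ^ (-(1:ℝ)/s)) * ∑ i ∈ Finset.range k, r ^ i := by
      have hb : ∀ i ∈ Finset.range k, m i ≤
          (C₁ * c₃ ^ p * (z k) ^ (-(1:ℝ)/s)) * r ^ (k - 1 - i) := by
        intro i hi
        have hik : i < k := Finset.mem_range.mp hi
        have h1 : m i ≤ C₁ * c₃ ^ p * (z i) ^ (-(1:ℝ)/s) := hmz i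
        have h2 : (z i) ^ (-(1:ℝ)/s) ≤ r ^ (k - i) * (z k) ^ (-(1:ℝ)/s) :=
          hziter i k hik.le
        have h3 : r ^ (k - i) ≤ r ^ (k - 1 - i) := by
          have : k - i = (k - 1 - i) + 1 := by omega
          rw [this, pow_succ]
          nlinarith [pow_nonneg hr0.le (k - 1 - i), pow_pos hr0 (k-1-i)]
        have hzk : (0:ℝ) ≤ (z k) ^ (-(1:ℝ)/s) := (Real.rpow_pos_of_pos (hz k) _).le
        calc m i ≤ C₁ * c₃ ^ p * (z i) ^ (-(1:ℝ)/s) := h1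
          _ ≤ C₁ * c₃ ^ p * (r ^ (k - i) * (z k) ^ (-(1:ℝ)/s)) := by
              exact mul_le_mul_of_nonneg_left h2 (by positivity)
          _ ≤ C₁ * c₃ ^ p * (r ^ (k - 1 - i) * (z k) ^ (-(1:ℝ)/s)) := by
              apply mul_le_mul_of_nonneg_left _ (by positivity)
              exact mul_le_mul_of_nonneg_right h3 hzk
          _ = (C₁ * c₃ ^ p * (z k) ^ (-(1:ℝ)/s)) * r ^ (k - 1 - i) := by ring
      calc ∑ i ∈ Finset.range k, m i
          ≤ ∑ i ∈ Finset.range k, (C₁ * c₃ ^ p * (z k) ^ (-(1:ℝ)/s)) * r ^ (k - 1 - i) :=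
            Finset.sum_le_sum hb
        _ = (C₁ * c₃ ^ p * (z k) ^ (-(1:ℝ)/s)) * ∑ i ∈ Finset.range k, r ^ (k - 1 - i) := by
            rw [Finset.mul_sum]
        _ = (C₁ * c₃ ^ p * (z k) ^ (-(1:ℝ)/s)) * ∑ i ∈ Finset.range k, r ^ i := by
            rw [Finset.sum_range_reflect (fun i => r ^ i) k]
    have hzk : (0:ℝ) ≤ (z k) ^ (-(1:ℝ)/s) := (Real.rpow_pos_of_pos (hz k) _).le
    calc t k ≤ C_S * ∑ i ∈ Finset.range k, m i := ht k
      _ ≤ C_S * ((C₁ * c₃ ^ p * (z k) ^ (-(1:ℝ)/s)) * ∑ i ∈ Finset.range k, r ^ i) := by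
          exact mul_le_mul_of_nonneg_left hsum hCS.le
      _ ≤ C_S * ((C₁ * c₃ ^ p * (z k) ^ (-(1:ℝ)/s)) * (1 / (1 - r))) := by
          apply mul_le_mul_of_nonneg_left _ hCS.le
          exact mul_le_mul_of_nonneg_left (hgeom k) (by positivity)
      _ = A * (z k) ^ (-(1:ℝ)/s) := by rw [hAdef]; ring
  -- conclusion
  refine ⟨C₂ ^ ((1:ℝ)/2) * A ^ s, by positivity, ?_⟩
  intro k hk htk
  -- z k ≤ A^s * (t k)^(-s)
  have hz1 : (t k) ^ s ≤ A ^ s * (z k)⁻¹ := by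
    have h1 : (t k) ^ s ≤ (A * (z k) ^ (-(1:ℝ)/s)) ^ s :=
      Real.rpow_le_rpow htk.le (htA k) hs.le
    have h2 : (A * (z k) ^ (-(1:ℝ)/s)) ^ s = A ^ s * (z k)⁻¹ := by
      rw [Real.mul_rpow hA0.le (Real.rpow_pos_of_pos (hz k) _).le,
        ← Real.rpow_mul (hz k).le]
      have : -(1:ℝ)/s * s = -1 := by field_simp
      rw [this, Real.rpow_neg_one]
    rw [← h2]; exact h1
  have htks : 0 < (t k) ^ s := Real.rpow_pos_of_pos htk _
  have hzk2 : z k ≤ A ^ s * (t k) ^ (-s) := by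
    have hAs : 0 < A ^ s := Real.rpow_pos_of_pos hA0 _
    have h3 : z k * (t k) ^ s ≤ A ^ s := by
      calc z k * (t k) ^ s ≤ z k * (A ^ s * (z k)⁻¹) :=
            mul_le_mul_of_nonneg_left hz1 (hz k).le
        _ = A ^ s := by
            rw [mul_comm (A ^ s) _, ← mul_assoc, mul_inv_cancel₀ (hz k).ne', one_mul]
    have h4 : z k ≤ A ^ s / (t k) ^ s := (le_div_iff₀ htks).mpr h3
    rw [Real.rpow_neg htk.le]
    rw [div_eq_mul_inv] at h4
    exact h4
  have hehalf : (e k) ^ ((1:ℝ)/2) ≤ C₂ ^ ((1:ℝ)/2) * z k := by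
    have h1 : (e k) ^ ((1:ℝ)/2) ≤ (C₂ * (z k)^2) ^ ((1:ℝ)/2) :=
      Real.rpow_le_rpow (he0 k).le (he k) (by norm_num)
    have h2 : (C₂ * (z k)^2) ^ ((1:ℝ)/2) = C₂ ^ ((1:ℝ)/2) * z k := by
      rw [Real.mul_rpow hC₂.le (by positivity)]
      congr 1
      rw [← Real.rpow_natCast (z k) 2, ← Real.rpow_mul (hz k).le]
      norm_num
    rw [← h2]; exact h1
  calc (e k) ^ ((1:ℝ)/2) ≤ C₂ ^ ((1:ℝ)/2) * z k := hehalf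
    _ ≤ C₂ ^ ((1:ℝ)/2) * (A ^ s * (t k) ^ (-s)) := by
        exact mul_le_mul_of_nonneg_left hzk2 (Real.rpow_pos_of_pos hC₂ _).le
    _ = C₂ ^ ((1:ℝ)/2) * A ^ s * (t k) ^ (-s) := by ring
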